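/- For the block lower-triangular preconditioner M = [[diag(L_1,…,L_n), 0],[−(ω_1 I,…,ω_n I), D]] of the transport system A = [[diag(L_1,…,L_n), col(−Σ_s,…,−Σ_s)],[−(ω_1 I,…,ω_n I), I]], the (scalar-flux block of the) preconditioned error propagation matrix I − M⁻¹A restricted to φ equals I − D⁻¹S with S = I − Σ_d ω_d L_d⁻¹ Σ_s; in particular if D = S the iteration on φ converges in one step. -/

import Mathlib

open Finset in
/-- For the block lower-triangular DSA preconditioner `M` of the transport
system `A`, the scalar-flux block of the error propagation matrix `I − M⁻¹A`
equals `I − D⁻¹S` (and the coupling from the angular-flux block vanishes);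
in particular if `D = S` the induced iteration on `φ` converges in one step. -/
theorem dsa_error_propagation {n m : ℕ}
    (L : Fin n → Matrix (Fin m) (Fin m) ℂ) (hL : ∀ d, IsUnit (L d))
    (Ss D : Matrix (Fin m) (Fin m) ℂ) (ω : Fin n → ℂ) (hD : IsUnit D) :
    let A : Matrix ((Fin m × Fin n) ⊕ Fin m) ((Fin m × Fin n) ⊕ Fin m) ℂ :=
      Matrix.fromBlocks (Matrix.blockDiagonal L)
        (fun p j => -Ss p.1 j)
        (fun i p => -(ω p.2) * (1 : Matrix (Fin m) (Fin m) ℂ) i p.1) 1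
    let Mprec : Matrix ((Fin m × Fin n) ⊕ Fin m) ((Fin m × Fin n) ⊕ Fin m) ℂ :=
      Matrix.fromBlocks (Matrix.blockDiagonal L) 0
        (fun i p => -(ω p.2) * (1 : Matrix (Fin m) (Fin m) ℂ) i p.1) D
    let S : Matrix (Fin m) (Fin m) ℂ := 1 - ∑ d, ω d • ((L d)⁻¹ * Ss)
    let E := (1 : Matrix ((Fin m × Fin n) ⊕ Fin m) ((Fin m × Fin n) ⊕ Fin m) ℂ)
      - Mprec⁻¹ * A
    (∀ i j : Fin m, E (Sum.inr i) (Sum.inr j) = ((1 : Matrix (Fin m) (Fin m) ℂ) - D⁻¹ * S) i j) ∧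
    (∀ (i : Fin m) (p : Fin m × Fin n), E (Sum.inr i) (Sum.inl p) = 0) ∧
    (D = S → ∀ i j : Fin m, E (Sum.inr i) (Sum.inr j) = 0) := by
  intro A Mprec S E
  classical
  set B : Matrix (Fin m × Fin n) (Fin m × Fin n) ℂ := Matrix.blockDiagonal L with hBdef
  set C : Matrix (Fin m) (Fin m × Fin n) ℂ :=
    fun i p => -(ω p.2) * (1 : Matrix (Fin m) (Fin m) ℂ) i p.1 with hCdef
  set U : Matrix (Fin m × Fin n) (Fin m) ℂ := fun p j => -Ss p.1 j with hUdef
  have hBmul : B * Matrix.blockDiagonal (fun d => (L d)⁻¹) = 1 := by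
    rw [hBdef, ← Matrix.blockDiagonal_mul]
    rw [show (fun d => L d * (L d)⁻¹) = fun _ => (1 : Matrix (Fin m) (Fin m) ℂ) from
      funext fun d => Matrix.mul_nonsing_inv _ ((Matrix.isUnit_iff_isUnit_det _).mp (hL d))]
    exact Matrix.blockDiagonal_one
  have hB : IsUnit B := by
    apply (Matrix.isUnit_iff_isUnit_det _).mpr
    exact IsUnit.of_mul_eq_one _ (by rw [← Matrix.det_mul, hBmul, Matrix.det_one])
  have hBinv : B⁻¹ = Matrix.blockDiagonal (fun d => (L d)⁻¹) :=
    Matrix.inv_eq_right_inv hBmul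
  have hMinv : Mprec⁻¹ = Matrix.fromBlocks B⁻¹ 0 (-(D⁻¹ * C * B⁻¹)) D⁻¹ :=
    Matrix.inv_fromBlocks_zero₁₂_of_isUnit_iff _ _ _ (iff_of_true hB hD)
  have key : C * B⁻¹ * U = ∑ d, ω d • ((L d)⁻¹ * Ss) := by
    rw [hBinv]
    ext i j
    simp only [Matrix.mul_apply]
    simp only [Matrix.mul_apply, Matrix.sum_apply, Matrix.smul_apply, hCdef, hUdef,
      Fintype.sum_prod_type, Matrix.blockDiagonal_apply, Matrix.one_apply, smul_eq_mul]
    simp [Finset.sum_mul, Finset.mul_sum, mul_ite, ite_mul, Finset.mul_sum]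
    rw [Finset.sum_comm]
    ring_nf
  have hMA : Mprec⁻¹ * A =
      Matrix.fromBlocks (B⁻¹ * B) (B⁻¹ * U) 0 (D⁻¹ - D⁻¹ * (C * B⁻¹ * U)) := by
    rw [hMinv]
    show Matrix.fromBlocks B⁻¹ 0 (-(D⁻¹ * C * B⁻¹)) D⁻¹ * Matrix.fromBlocks B U C 1 = _
    rw [Matrix.fromBlocks_multiply]
    have h21 : -(D⁻¹ * C * B⁻¹) * B + D⁻¹ * C = 0 := by
      rw [Matrix.neg_mul, Matrix.mul_assoc (D⁻¹ * C), Matrix.nonsing_inv_mul _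
        ((Matrix.isUnit_iff_isUnit_det _).mp hB), Matrix.mul_one, neg_add_cancel]
    have h22 : -(D⁻¹ * C * B⁻¹) * U + D⁻¹ * 1 = D⁻¹ - D⁻¹ * (C * B⁻¹ * U) := by
      rw [Matrix.neg_mul, Matrix.mul_one, sub_eq_neg_add]
      congr 1
      rw [Matrix.mul_assoc, Matrix.mul_assoc, Matrix.mul_assoc]
    simp only [Matrix.zero_mul, add_zero, h21, h22]
  have hblk : ∀ i j : Fin m, E (Sum.inr i) (Sum.inr j)
      = ((1 : Matrix (Fin m) (Fin m) ℂ) - D⁻¹ * S) i j := by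
    intro i j
    have hEdef : E = 1 - Mprec⁻¹ * A := rfl
    rw [hEdef, hMA]
    simp only [Matrix.sub_apply, Matrix.fromBlocks_apply₂₂, Matrix.one_apply, Sum.inr.injEq]
    have : D⁻¹ * S = D⁻¹ - D⁻¹ * (C * B⁻¹ * U) := by
      rw [key]; show D⁻¹ * (1 - _) = _; rw [Matrix.mul_sub, Matrix.mul_one]
    rw [this]
    simp [Matrix.sub_apply, Matrix.one_apply]
  refine ⟨hblk, ?_, ?_⟩
  · intro i p
    have hEdef : E = 1 - Mprec⁻¹ * A := rfl
    rw [hEdef, hMA]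
    simp [Matrix.one_apply]
  · intro hDS i j
    rw [hblk i j]
    have hS : IsUnit S := hDS ▸ hD
    have : D⁻¹ * S = 1 := by
      rw [hDS]; exact Matrix.nonsing_inv_mul S ((Matrix.isUnit_iff_isUnit_det S).mp hS)
    rw [this]
    simp
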